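/- For the structural SVM, the Lagrangian duality gap between the primal objective P(w) = (λ/2)‖w‖² + (1/n)Σ_i max_{y∈Y_i} H_i(y;w) at w = Aα and the dual objective D(α) = b^Tα − (λ/2)‖Aα‖² equals the linearization gap: P(Aα) − D(α) = ⟨α − s, ∇f(α)⟩, where f(α) = (λ/2)‖Aα‖² − b^Tα and s ∈ argmin_{s'∈D} ⟨s', ∇f(α)⟩. -/

import Mathlib

open RealInnerProductSpace

/-- For the structural SVM, the Lagrangian duality gap between the primal
objective at `w = Aα` and the dual objective at `α` equals the linearization
gap `⟨α − s, ∇f(α)⟩`, where `s` minimizes the linearized dual over the product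
of simplices. -/
theorem svm_lagrangian_gap_eq_linearization_gap {d n : ℕ} (hn : 1 ≤ n)
    (lam : ℝ) (hlam : 0 < lam)
    (k : Fin n → ℕ) (hk : ∀ i, 1 ≤ k i)
    (ψ : ∀ i : Fin n, Fin (k i) → EuclideanSpace ℝ (Fin d))
    (L : ∀ i : Fin n, Fin (k i) → ℝ)
    (Amul : (∀ i : Fin n, Fin (k i) → ℝ) → EuclideanSpace ℝ (Fin d))
    (hAmul : ∀ α, Amul α = ∑ i, ∑ y, (α i y / (lam * n)) • ψ i y)
    (f : (∀ i : Fin n, Fin (k i) → ℝ) → ℝ)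
    (hf : ∀ α, f α = lam / 2 * ‖Amul α‖ ^ 2 - ∑ i, ∑ y, (L i y / n) * α i y)
    (gradf : (∀ i : Fin n, Fin (k i) → ℝ) → (∀ i : Fin n, Fin (k i) → ℝ))
    (hgrad : ∀ α i y,
        gradf α i y = -(L i y - ⟪Amul α, ψ i y⟫) / n)
    (P : EuclideanSpace ℝ (Fin d) → ℝ)
    (hP : ∀ w, P w = lam / 2 * ‖w‖ ^ 2
        + (1 / n : ℝ) * ∑ i, ⨆ y : Fin (k i), (L i y - ⟪w, ψ i y⟫))
    (Dval : (∀ i : Fin n, Fin (k i) → ℝ) → ℝ)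
    (hDval : ∀ α, Dval α = (∑ i, ∑ y, (L i y / n) * α i y)
        - lam / 2 * ‖Amul α‖ ^ 2)
    (Dset : Set (∀ i : Fin n, Fin (k i) → ℝ))
    (hD : Dset = {α | ∀ i, α i ∈ stdSimplex ℝ (Fin (k i))})
    (α : ∀ i : Fin n, Fin (k i) → ℝ) (hα : α ∈ Dset)
    (s : ∀ i : Fin n, Fin (k i) → ℝ) (hs : s ∈ Dset)
    (hsmin : ∀ s' ∈ Dset,
        (∑ i, ∑ y, s i y * gradf α i y) ≤ ∑ i, ∑ y, s' i y * gradf α i y) :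
    P (Amul α) - Dval α = ∑ i, ∑ y, (α i y - s i y) * gradf α i y := by
  have hn0 : (0:ℝ) < n := by exact_mod_cast hn
  have hne : (n:ℝ) ≠ 0 := ne_of_gt hn0
  have hnon : ∀ i, Nonempty (Fin (k i)) := fun i => Fin.pos_iff_nonempty.mp (hk i)
  set w := Amul α with hw
  have hex : ∀ i, ∃ y : Fin (k i), ∀ y', gradf α i y ≤ gradf α i y' := by
    intro i
    haveI := hnon i
    obtain ⟨y, -, hy⟩ := Finset.exists_min_image Finset.univ (fun y => gradf α i y)
      ⟨Classical.arbitrary _, Finset.mem_univ _⟩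
    exact ⟨y, fun y' => hy y' (Finset.mem_univ _)⟩
  choose y0 hy0 using hex
  set s' : ∀ i : Fin n, Fin (k i) → ℝ := fun i y => if y = y0 i then 1 else 0 with hs'def
  have hs'D : s' ∈ Dset := by
    rw [hD]
    intro i
    constructor
    · intro y; dsimp [s']; split <;> norm_num
    · simp [s']
  rw [hD] at hα hs
  -- (A) value of the linear minimization
  have hAeq : ∑ i, ∑ y, s i y * gradf α i y = ∑ i, gradf α i (y0 i) := by
    apply le_antisymm
    · have h1 := hsmin s' (by rw [hD] at hs'D ⊢; exact hs'D)
      have h2 : ∑ i, ∑ y, s' i y * gradf α i y = ∑ i, gradf α i (y0 i) := by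
        refine Finset.sum_congr rfl fun i _ => ?_
        simp [s', ite_mul]
      linarith
    · refine Finset.sum_le_sum fun i _ => ?_
      calc gradf α i (y0 i) = (∑ y, s i y) * gradf α i (y0 i) := by
            rw [(hs i).2, one_mul]
        _ = ∑ y, s i y * gradf α i (y0 i) := by rw [Finset.sum_mul]
        _ ≤ ∑ y, s i y * gradf α i y :=
            Finset.sum_le_sum fun y _ =>
              mul_le_mul_of_nonneg_left (hy0 i y) ((hs i).1 y)
  -- (B) the suprema
  have hHmax : ∀ i y, L i y - ⟪w, ψ i y⟫ ≤ L i (y0 i) - ⟪w, ψ i (y0 i)⟫ := by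
    intro i y
    have h := hy0 i y
    rw [hgrad, hgrad] at h
    have h' := mul_le_mul_of_nonneg_right h hn0.le
    rw [div_mul_cancel₀ _ hne, div_mul_cancel₀ _ hne] at h'
    rw [← hw] at h'
    linarith
  have hsup : ∀ i, (⨆ y : Fin (k i), (L i y - ⟪w, ψ i y⟫)) = L i (y0 i) - ⟪w, ψ i (y0 i)⟫ := by
    intro i
    haveI := hnon i
    exact le_antisymm (ciSup_le (hHmax i))
      (le_ciSup (f := fun y => L i y - ⟪w, ψ i y⟫)
        (Set.Finite.bddAbove (Set.finite_range _)) (y0 i))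
  -- (C) inner product identity
  have key : ⟪w, Amul α⟫ = ∑ i, ∑ y, (α i y / (lam * n)) * ⟪w, ψ i y⟫ := by
    rw [hAmul, inner_sum]
    refine Finset.sum_congr rfl fun i _ => ?_
    rw [inner_sum]
    exact Finset.sum_congr rfl fun y _ => real_inner_smul_right _ _ _
  have hip : ∑ i, ∑ y, α i y * ⟪w, ψ i y⟫ = lam * n * ‖w‖ ^ 2 := by
    have hln : (lam * n) ≠ 0 := mul_ne_zero (ne_of_gt hlam) hne
    calc ∑ i, ∑ y, α i y * ⟪w, ψ i y⟫
        = lam * n * ∑ i, ∑ y, (α i y / (lam * n)) * ⟪w, ψ i y⟫ := by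
          rw [Finset.mul_sum]
          refine Finset.sum_congr rfl fun i _ => ?_
          rw [Finset.mul_sum]
          refine Finset.sum_congr rfl fun y _ => ?_
          field_simp
      _ = lam * n * ‖w‖ ^ 2 := by
          rw [← key, ← hw, real_inner_self_eq_norm_sq]
  -- expand α·grad
  have hαg : ∑ i, ∑ y, α i y * gradf α i y
      = lam * ‖w‖ ^ 2 - ∑ i, ∑ y, (L i y / n) * α i y := by
    have step : ∀ i ∈ Finset.univ, ∑ y, α i y * gradf α i y
        = (∑ y, α i y * ⟪w, ψ i y⟫) / n - ∑ y, (L i y / n) * α i y := by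
      intro i _
      rw [Finset.sum_div, ← Finset.sum_sub_distrib]
      refine Finset.sum_congr rfl fun y _ => ?_
      rw [hgrad, ← hw]
      field_simp
      ring
    rw [Finset.sum_congr rfl step, Finset.sum_sub_distrib, ← Finset.sum_div, hip]
    field_simp
  -- grad at minimizers
  have hgy0 : ∑ i, gradf α i (y0 i) = -(∑ i, (L i (y0 i) - ⟪w, ψ i (y0 i)⟫)) / n := by
    have step : ∀ i ∈ Finset.univ, gradf α i (y0 i)
        = -(L i (y0 i) - ⟪w, ψ i (y0 i)⟫) / n := by
      intro i _; rw [hgrad, ← hw]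
    rw [Finset.sum_congr rfl step, ← Finset.sum_div, ← Finset.sum_neg_distrib]
  have hRHS : ∑ i, ∑ y, (α i y - s i y) * gradf α i y
      = (∑ i, ∑ y, α i y * gradf α i y) - ∑ i, ∑ y, s i y * gradf α i y := by
    simp [sub_mul, Finset.sum_sub_distrib]
  rw [hP, hDval, hRHS, hAeq, hαg, hgy0, ← hw]
  simp only [hsup]
  field_simp
  ring
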